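/- Let L be a finite-dimensional Lie algebra. If [A/B ↘ C/D] is an m-crossing of L with B/D also a chief factor of L, then [A/C ↘ B/D] is an m-crossing; moreover a maximal subalgebra M supplements C/D if and only if M supplements B/D. -/

import Mathlib

section ChiefFactors

variable (K : Type*) (L : Type*) [Field K] [LieRing L] [LieAlgebra K L]

/-- `A/B` is a chief factor of `L`: `B` is an ideal and `A/B` is a minimal ideal of `L/B`,
i.e. `B < A` and there is no ideal strictly between `B` and `A`. -/
def IsChiefFactor (A B : LieIdeal K L) : Prop :=
  B < A ∧ ∀ C : LieIdeal K L, B < C → C ≤ A → C = A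

/-- The factor `A/B` is abelian. -/
def FactorAbelian (A B : LieIdeal K L) : Prop :=
  ∀ a ∈ A, ∀ a' ∈ A, ⁅a, a'⁆ ∈ B

/-- `M` is a maximal (proper) subalgebra of `L`. -/
def IsMaximalSubalgebra (M : LieSubalgebra K L) : Prop :=
  M ≠ ⊤ ∧ ∀ N : LieSubalgebra K L, M < N → N = ⊤

/-- `L = A + M`. -/
def SumIsTop (A : LieIdeal K L) (M : LieSubalgebra K L) : Prop :=
  ∀ x : L, ∃ a ∈ A, ∃ m ∈ M, x = a + m

/-- `M` supplements the factor `A/B` : `L = A + M` and `B ⊆ A ∩ M`. -/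
def Supplements (M : LieSubalgebra K L) (A B : LieIdeal K L) : Prop :=
  SumIsTop K L A M ∧ B ≤ A ∧ (B : Set L) ⊆ M

/-- `M` complements the factor `A/B` : `L = A + M` and `A ∩ M = B`. -/
def Complements (M : LieSubalgebra K L) (A B : LieIdeal K L) : Prop :=
  SumIsTop K L A M ∧ (A : Set L) ∩ M = B

/-- `A/B` is a supplemented chief factor (supplemented by a maximal subalgebra). -/
def SupplementedFactor (A B : LieIdeal K L) : Prop :=
  ∃ M : LieSubalgebra K L, IsMaximalSubalgebra K L M ∧ Supplements K L M A B

/-- `A/B` is a Frattini chief factor: `A/B ⊆ φ(L/B)`, equivalently `A` is contained in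
every maximal subalgebra of `L` containing `B`. -/
def FrattiniFactor (A B : LieIdeal K L) : Prop :=
  IsChiefFactor K L A B ∧
    ∀ M : LieSubalgebra K L, IsMaximalSubalgebra K L M → (B : Set L) ⊆ M → (A : Set L) ⊆ M

/-- `A/B ↘ C/D` : `A = B + C` and `B ∩ C = D`. -/
def Searrow (A B C D : LieIdeal K L) : Prop := A = B ⊔ C ∧ B ⊓ C = D

/-- `[A/B ↘ C/D]` is an m-crossing. -/
def MCrossing (A B C D : LieIdeal K L) : Prop :=
  IsChiefFactor K L A B ∧ IsChiefFactor K L C D ∧ Searrow K L A B C D ∧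
    FrattiniFactor K L A B ∧ SupplementedFactor K L C D

/-- The chief factors `A/B` and `C/D` are m-related. -/
def MRelated (A B C D : LieIdeal K L) : Prop :=
  (∃ R S, IsChiefFactor K L R S ∧ SupplementedFactor K L R S ∧
     Searrow K L R S A B ∧ Searrow K L R S C D) ∨
  (∃ U V W X, MCrossing K L U V W X ∧ Searrow K L V X A B ∧ Searrow K L W X C D) ∨
  (∃ Y Z, FrattiniFactor K L Y Z ∧ Searrow K L A B Y Z ∧ Searrow K L C D Y Z) ∨
  (∃ U V W X, MCrossing K L U V W X ∧ Searrow K L A B U V ∧ Searrow K L C D U W)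

/-- `I` is the core `M_L` of the subalgebra `M`: the largest ideal of `L` contained in `M`. -/
def IsCoreOf (I : LieIdeal K L) (M : LieSubalgebra K L) : Prop :=
  (I : Set L) ⊆ M ∧ ∀ J : LieIdeal K L, (J : Set L) ⊆ M → J ≤ I

/-- The quotient `L/I` is primitive: it has a core-free maximal subalgebra. -/
def QuotPrimitive (I : LieIdeal K L) : Prop :=
  ∃ M : LieSubalgebra K L, IsMaximalSubalgebra K L M ∧ IsCoreOf K L I M

/-- The quotient `L/I` is monolithic: it has a unique minimal ideal. -/
def QuotMonolithic (I : LieIdeal K L) : Prop :=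
  ∃! J : LieIdeal K L, IsChiefFactor K L J I

/-- `M` is a monolithic maximal subalgebra supplementing `A/B` :
`L/M_L` is a monolithic primitive Lie algebra. -/
def MonolithicSupplement (M : LieSubalgebra K L) (A B : LieIdeal K L) : Prop :=
  IsMaximalSubalgebra K L M ∧ Supplements K L M A B ∧
    ∃ I : LieIdeal K L, IsCoreOf K L I M ∧ QuotMonolithic K L I

/-- `A/B` and `C/D` are `L`-isomorphic: there is an isomorphism of `L`-modules between
the factors which moreover preserves the induced Lie brackets. -/
def LIso (A B C D : LieIdeal K L) : Prop :=
  B ≤ A ∧ D ≤ C ∧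
  ∃ e : (A ⧸ (LieSubmodule.comap (LieSubmodule.incl A) B)) ≃ₗ⁅K,L⁆
        (C ⧸ (LieSubmodule.comap (LieSubmodule.incl C) D)),
    ∀ (a a' : A) (c c' : C),
      e (LieSubmodule.Quotient.mk a) = LieSubmodule.Quotient.mk c →
      e (LieSubmodule.Quotient.mk a') = LieSubmodule.Quotient.mk c' →
      e (LieSubmodule.Quotient.mk ⟨⁅(a : L), (a' : L)⁆, A.lie_mem a'.2⟩) =
        LieSubmodule.Quotient.mk ⟨⁅(c : L), (c' : L)⁆, C.lie_mem c'.2⟩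

/-- `L/I` is a primitive Lie algebra of type 3 with (exactly two) minimal ideals
`J1/I` and `J2/I`, both non-abelian. -/
def QuotPrimitiveType3 (I J1 J2 : LieIdeal K L) : Prop :=
  QuotPrimitive K L I ∧ J1 ≠ J2 ∧ IsChiefFactor K L J1 I ∧ IsChiefFactor K L J2 I ∧
    ¬ FactorAbelian K L J1 I ∧ ¬ FactorAbelian K L J2 I ∧
    ∀ J : LieIdeal K L, IsChiefFactor K L J I → J = J1 ∨ J = J2

/-- `A/B` and `C/D` are `L`-connected. -/
def LConnected (A B C D : LieIdeal K L) : Prop :=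
  LIso K L A B C D ∨
    ∃ I J1 J2 : LieIdeal K L, QuotPrimitiveType3 K L I J1 J2 ∧
      LIso K L J1 I A B ∧ LIso K L J2 I C D

end ChiefFactors

variable {K : Type*} {L : Type*} [Field K] [LieRing L] [LieAlgebra K L]
variable [FiniteDimensional K L]


namespace Stmt9Aux

variable {K : Type*} {L : Type*} [Field K] [LieRing L] [LieAlgebra K L]

/-- The sum of an ideal and a subalgebra, as a subalgebra. -/
def idealSup (I : LieIdeal K L) (S : LieSubalgebra K L) : LieSubalgebra K L where
  toSubmodule := LieSubmodule.toSubmodule I ⊔ S.toSubmodule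
  lie_mem' := by
    intro x y hx hy
    obtain ⟨a, ha, s, hs, rfl⟩ := Submodule.mem_sup.1 hx
    obtain ⟨b, hb, t, ht, rfl⟩ := Submodule.mem_sup.1 hy
    have h1 : ⁅a, b + t⁆ ∈ I := by
      rw [← lie_skew]
      exact neg_mem (I.lie_mem ha)
    have h2 : ⁅s, b⁆ ∈ I := I.lie_mem hb
    have h3 : ⁅s, t⁆ ∈ S := S.lie_mem' hs ht
    have heq : ⁅a + s, b + t⁆ = ⁅a, b + t⁆ + ⁅s, b⁆ + ⁅s, t⁆ := by
      simp only [add_lie, lie_add]; abel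
    show ⁅a + s, b + t⁆ ∈ LieSubmodule.toSubmodule I ⊔ S.toSubmodule
    rw [heq]
    exact add_mem (add_mem (Submodule.mem_sup_left h1) (Submodule.mem_sup_left h2))
      (Submodule.mem_sup_right h3)

theorem mem_idealSup {I : LieIdeal K L} {S : LieSubalgebra K L} {x : L} :
    x ∈ idealSup I S ↔ ∃ a ∈ I, ∃ s ∈ S, x = a + s := by
  constructor
  · intro hx
    obtain ⟨a, ha, s, hs, h⟩ := Submodule.mem_sup.1 hx
    exact ⟨a, ha, s, hs, h.symm⟩
  · rintro ⟨a, ha, s, hs, rfl⟩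
    exact Submodule.add_mem_sup ha hs

theorem sumIsTop_iff {I : LieIdeal K L} {M : LieSubalgebra K L} :
    SumIsTop K L I M ↔ LieSubmodule.toSubmodule I ⊔ M.toSubmodule = ⊤ := by
  constructor
  · intro h
    rw [Submodule.eq_top_iff']
    intro x
    obtain ⟨a, ha, m, hm, rfl⟩ := h x
    exact Submodule.add_mem_sup ha hm
  · intro h x
    have : x ∈ LieSubmodule.toSubmodule I ⊔ M.toSubmodule := h ▸ Submodule.mem_top
    obtain ⟨a, ha, m, hm, hx⟩ := Submodule.mem_sup.1 this
    exact ⟨a, ha, m, hm, hx.symm⟩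

theorem eq_top_of_sum_subset {I : LieIdeal K L} {M : LieSubalgebra K L}
    (h : SumIsTop K L I M) (hsub : (I : Set L) ⊆ M) : M = ⊤ := by
  rw [eq_top_iff]
  intro x _
  obtain ⟨a, ha, m, hm, rfl⟩ := h x
  exact M.add_mem (hsub ha) hm

theorem sumIsTop_of_not_subset (I : LieIdeal K L) (M : LieSubalgebra K L)
    (hmax : IsMaximalSubalgebra K L M) (h : ¬ (I : Set L) ⊆ M) : SumIsTop K L I M := by
  obtain ⟨a, ha, haM⟩ := Set.not_subset.1 h
  have hMS : M ≤ idealSup I M := fun x hx =>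
    mem_idealSup.2 ⟨0, zero_mem _, x, hx, (zero_add x).symm⟩
  have hlt : M < idealSup I M := by
    refine lt_of_le_of_ne hMS (fun he => haM ?_)
    rw [he]
    exact mem_idealSup.2 ⟨a, ha, 0, zero_mem _, (add_zero a).symm⟩
  have htop := hmax.2 _ hlt
  intro x
  have : x ∈ idealSup I M := htop ▸ trivial
  exact mem_idealSup.1 this

/-- `(I ⊓ M) + (M ⊓ M')` is a subalgebra, for an ideal `I` and subalgebras `M`, `M'`. -/
def crossSubalg (I : LieIdeal K L) (M M' : LieSubalgebra K L) : LieSubalgebra K L where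
  toSubmodule := (LieSubmodule.toSubmodule I ⊓ M.toSubmodule) ⊔ (M.toSubmodule ⊓ M'.toSubmodule)
  lie_mem' := by
    intro x y hx hy
    obtain ⟨n, hn, g, hg, rfl⟩ := Submodule.mem_sup.1 hx
    obtain ⟨n', hn', g', hg', rfl⟩ := Submodule.mem_sup.1 hy
    have hnI : n ∈ I := hn.1
    have hnM : n ∈ M := hn.2
    have hn'I : n' ∈ I := hn'.1
    have hn'M : n' ∈ M := hn'.2
    have hgM : g ∈ M := hg.1
    have hgM' : g ∈ M' := hg.2
    have hg'M : g' ∈ M := hg'.1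
    have hg'M' : g' ∈ M' := hg'.2
    have t1 : ⁅n, n'⁆ ∈ LieSubmodule.toSubmodule I ⊓ M.toSubmodule :=
      ⟨I.lie_mem hn'I, M.lie_mem' hnM hn'M⟩
    have t2 : ⁅n, g'⁆ ∈ LieSubmodule.toSubmodule I ⊓ M.toSubmodule := by
      refine ⟨?_, M.lie_mem' hnM hg'M⟩
      rw [← lie_skew]
      exact neg_mem (I.lie_mem hnI)
    have t3 : ⁅g, n'⁆ ∈ LieSubmodule.toSubmodule I ⊓ M.toSubmodule :=
      ⟨I.lie_mem hn'I, M.lie_mem' hgM hn'M⟩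
    have t4 : ⁅g, g'⁆ ∈ M.toSubmodule ⊓ M'.toSubmodule :=
      ⟨M.lie_mem' hgM hg'M, M'.lie_mem' hgM' hg'M'⟩
    have heq : ⁅n + g, n' + g'⁆ = ⁅n, n'⁆ + ⁅n, g'⁆ + ⁅g, n'⁆ + ⁅g, g'⁆ := by
      simp only [add_lie, lie_add]; abel
    show ⁅n + g, n' + g'⁆ ∈
      (LieSubmodule.toSubmodule I ⊓ M.toSubmodule) ⊔ (M.toSubmodule ⊓ M'.toSubmodule)
    rw [heq]
    exact add_mem (add_mem (add_mem (Submodule.mem_sup_left t1) (Submodule.mem_sup_left t2))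
      (Submodule.mem_sup_left t3)) (Submodule.mem_sup_right t4)

variable [FiniteDimensional K L]

theorem exists_relmax_aux (n : ℕ) :
    ∀ S T : LieSubalgebra K L, S < T →
      Module.finrank K L - Module.finrank K S.toSubmodule ≤ n →
      ∃ M₂ : LieSubalgebra K L, S ≤ M₂ ∧ M₂ < T ∧ ∀ X, M₂ < X → X ≤ T → X = T := by
  induction n with
  | zero =>
    intro S T h hb
    exfalso
    have hle : Module.finrank K S.toSubmodule ≤ Module.finrank K L := Submodule.finrank_le _
    have heq : Module.finrank K S.toSubmodule = Module.finrank K L := by omega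
    have htop : S.toSubmodule = ⊤ := Submodule.eq_top_of_finrank_eq heq
    have : T ≤ S := fun x _ => by
      have : x ∈ S.toSubmodule := htop ▸ Submodule.mem_top
      exact this
    exact h.not_ge this
  | succ n ih =>
    intro S T h hb
    by_cases hc : ∀ X : LieSubalgebra K L, S < X → X ≤ T → X = T
    · exact ⟨S, le_refl _, h, hc⟩
    · push_neg at hc
      obtain ⟨X, hSX, hXT, hXne⟩ := hc
      have hlt : X < T := lt_of_le_of_ne hXT hXne
      have hsub : S.toSubmodule < X.toSubmodule := by
        rcases SetLike.lt_iff_le_and_exists.1 hSX with ⟨hle, y, hy, hyn⟩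
        exact SetLike.lt_iff_le_and_exists.2 ⟨fun z hz => hle hz, y, hy, hyn⟩
      have hrk := Submodule.finrank_lt_finrank_of_lt hsub
      obtain ⟨M₂, h1, h2, h3⟩ := ih X T hlt (by omega)
      exact ⟨M₂, le_trans (le_of_lt hSX) h1, h2, h3⟩

theorem exists_relmax (S T : LieSubalgebra K L) (h : S < T) :
    ∃ M₂ : LieSubalgebra K L, S ≤ M₂ ∧ M₂ < T ∧ ∀ X, M₂ < X → X ≤ T → X = T :=
  exists_relmax_aux (Module.finrank K L - Module.finrank K S.toSubmodule) S T h le_rfl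

end Stmt9Aux

theorem stmt9 (A B C D : LieIdeal K L)
    (hcross : MCrossing K L A B C D)
    (hAC : IsChiefFactor K L A C) (hBD : IsChiefFactor K L B D) :
    MCrossing K L A C B D ∧
    ∀ M : LieSubalgebra K L, IsMaximalSubalgebra K L M →
      (Supplements K L M C D ↔ Supplements K L M B D) := by
  obtain ⟨hchAB, hchCD, ⟨hsup, hinf⟩, hfrat, M₀, hM₀max, hM₀sum, hDC, hDM₀⟩ := hcross
  have hDB : D ≤ B := hinf ▸ inf_le_left
  have hCA : C ≤ A := hsup ▸ le_sup_right
  have hBA : B ≤ A := hsup ▸ le_sup_left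
  have hCB_D : ∀ c ∈ C, ∀ b ∈ B, ⁅c, b⁆ ∈ D := by
    intro c hc b hb
    have h1 : ⁅c, b⁆ ∈ B := B.lie_mem hb
    have h2 : ⁅c, b⁆ ∈ C := by
      rw [← lie_skew]
      exact neg_mem (C.lie_mem hc)
    have h3 : ⁅c, b⁆ ∈ B ⊓ C := by
      rw [LieSubmodule.mem_inf]
      exact ⟨h1, h2⟩
    rwa [hinf] at h3
  -- Any maximal subalgebra `M` with `L = C + M` also satisfies `L = B + M` (and `B ⊄ M`).
  have key1 : ∀ M : LieSubalgebra K L, IsMaximalSubalgebra K L M → SumIsTop K L C M →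
      SumIsTop K L B M ∧ ¬ (B : Set L) ⊆ M := by
    intro M hMmax hsum
    have hBnotM : ¬ (B : Set L) ⊆ M := by
      intro hBM
      have hAM := hfrat.2 M hMmax hBM
      have hCM : (C : Set L) ⊆ M := fun x hx => hAM (hCA hx)
      exact hMmax.1 (Stmt9Aux.eq_top_of_sum_subset hsum hCM)
    exact ⟨Stmt9Aux.sumIsTop_of_not_subset B M hMmax hBnotM, hBnotM⟩
  obtain ⟨hLBM₀, hBnotM₀⟩ := key1 M₀ hM₀max hM₀sum
  -- `B ∩ M₀ = D`
  have hBM₀D : ∀ x, x ∈ B → x ∈ M₀ → x ∈ D := by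
    intro x hxB hxM₀
    set J : LieIdeal K L :=
      { toSubmodule := LieSubmodule.toSubmodule B ⊓ M₀.toSubmodule
        lie_mem := by
          intro y m hm
          have hmB : m ∈ B := hm.1
          have hmM₀ : m ∈ M₀ := hm.2
          obtain ⟨c, hc, m₀, hm₀, rfl⟩ := hM₀sum y
          have h1 : ⁅c, m⁆ ∈ D := hCB_D c hc m hmB
          have h2 : ⁅m₀, m⁆ ∈ B := B.lie_mem hmB
          have h3 : ⁅m₀, m⁆ ∈ M₀ := M₀.lie_mem' hm₀ hmM₀
          show ⁅c + m₀, m⁆ ∈ LieSubmodule.toSubmodule B ⊓ M₀.toSubmodule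
          rw [add_lie]
          exact ⟨add_mem (hDB h1) h2, add_mem (hDM₀ h1) h3⟩ } with hJdef
    have hxJ : x ∈ J := ⟨hxB, hxM₀⟩
    by_contra hxD
    have hDJ : D ≤ J := fun z hz => ⟨hDB hz, hDM₀ hz⟩
    have hDltJ : D < J := lt_of_le_of_ne hDJ (fun he => hxD (by rw [he]; exact hxJ))
    have hJB : J ≤ B := fun z hz => hz.1
    have hJeqB := hBD.2 J hDltJ hJB
    apply hBnotM₀
    intro z hz
    have hzJ : z ∈ J := by rw [hJeqB]; exact hz
    exact hzJ.2
  -- The crux: every maximal subalgebra containing `C` contains `A`.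
  have crux : ∀ M : LieSubalgebra K L, IsMaximalSubalgebra K L M → (C : Set L) ⊆ M →
      (A : Set L) ⊆ M := by
    intro M hMmax hCM
    by_contra hAM
    have hBnotM : ¬ (B : Set L) ⊆ M := fun hBM => hAM (hfrat.2 M hMmax hBM)
    have hLBM : SumIsTop K L B M := Stmt9Aux.sumIsTop_of_not_subset B M hMmax hBnotM
    have hBMtop : LieSubmodule.toSubmodule B ⊔ M.toSubmodule = ⊤ := Stmt9Aux.sumIsTop_iff.1 hLBM
    have hCM₀top : LieSubmodule.toSubmodule C ⊔ M₀.toSubmodule = ⊤ :=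
      Stmt9Aux.sumIsTop_iff.1 hM₀sum
    have hDsubM : (D : Set L) ⊆ M := fun x hx => hCM (hDC hx)
    have hBM₀sub : LieSubmodule.toSubmodule B ⊓ M₀.toSubmodule ≤ LieSubmodule.toSubmodule D :=
      fun x hx => hBM₀D x hx.1 hx.2
    set P : LieSubalgebra K L := Stmt9Aux.crossSubalg B M M₀ with hP
    have hPsub : P.toSubmodule =
        (LieSubmodule.toSubmodule B ⊓ M.toSubmodule) ⊔ (M.toSubmodule ⊓ M₀.toSubmodule) := rfl
    have hP_ne : P ≠ M := by
      intro hPM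
      have hPM' : (LieSubmodule.toSubmodule B ⊓ M.toSubmodule) ⊔
          (M.toSubmodule ⊓ M₀.toSubmodule) = M.toSubmodule :=
        congrArg LieSubalgebra.toSubmodule hPM
      have h1 : LieSubmodule.toSubmodule B ⊔ (M.toSubmodule ⊓ M₀.toSubmodule) = ⊤ := by
        rw [← hBMtop]
        conv_rhs => rw [← hPM']
        rw [← sup_assoc, sup_eq_left.2 (inf_le_left :
          LieSubmodule.toSubmodule B ⊓ M.toSubmodule ≤ LieSubmodule.toSubmodule B)]
      have hmod := sup_inf_assoc_of_le (α := Submodule K L) (LieSubmodule.toSubmodule B)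
        (inf_le_right : M.toSubmodule ⊓ M₀.toSubmodule ≤ M₀.toSubmodule)
      have h2 : M₀.toSubmodule = (M.toSubmodule ⊓ M₀.toSubmodule) ⊔
          (LieSubmodule.toSubmodule B ⊓ M₀.toSubmodule) := by
        rw [← hmod, sup_comm (M.toSubmodule ⊓ M₀.toSubmodule) (LieSubmodule.toSubmodule B),
          h1, top_inf_eq]
      have hDG : LieSubmodule.toSubmodule D ≤ M.toSubmodule ⊓ M₀.toSubmodule :=
        fun x hx => ⟨hDsubM hx, hDM₀ hx⟩
      have h3 : M₀.toSubmodule ≤ M.toSubmodule := by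
        rw [h2]
        exact sup_le inf_le_left (le_trans hBM₀sub (le_trans hDG inf_le_left))
      have hM₀M : M₀ ≤ M := fun x hx => h3 hx
      have hM₀eqM : M₀ = M := by
        rcases eq_or_lt_of_le hM₀M with he | hl
        · exact he
        · exact absurd (hM₀max.2 M hl) hMmax.1
      exact hM₀max.1 (Stmt9Aux.eq_top_of_sum_subset hM₀sum (hM₀eqM ▸ hCM))
    have hPleM : P ≤ M := fun x hx => by
      obtain ⟨a, ha, b, hb, rfl⟩ := Submodule.mem_sup.1 hx
      exact M.add_mem ha.2 hb.1
    have hPltM : P < M := lt_of_le_of_ne hPleM hP_ne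
    obtain ⟨M₂, hPM₂, hM₂M, hM₂max⟩ := Stmt9Aux.exists_relmax P M hPltM
    set Y := Stmt9Aux.idealSup B M₂ with hYdef
    have hBY : (B : Set L) ⊆ Y := fun x hx =>
      Stmt9Aux.mem_idealSup.2 ⟨x, hx, 0, zero_mem _, (add_zero x).symm⟩
    have hM₂Y : M₂ ≤ Y := fun x hx =>
      Stmt9Aux.mem_idealSup.2 ⟨0, zero_mem _, x, hx, (zero_add x).symm⟩
    have hPM₂' : P.toSubmodule ≤ M₂.toSubmodule := fun x hx => hPM₂ hx
    have hNM₂ : LieSubmodule.toSubmodule B ⊓ M.toSubmodule ≤ M₂.toSubmodule :=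
      le_trans (le_trans le_sup_left (le_of_eq hPsub.symm)) hPM₂'
    have hM₂leM : M₂.toSubmodule ≤ M.toSubmodule := fun x hx => (le_of_lt hM₂M) hx
    have hY_ne_top : Y ≠ ⊤ := by
      intro hYtop
      have hYtop' : LieSubmodule.toSubmodule B ⊔ M₂.toSubmodule = ⊤ := by
        have := congrArg LieSubalgebra.toSubmodule hYtop
        rwa [LieSubalgebra.top_toSubmodule] at this
      have hmod := sup_inf_assoc_of_le (α := Submodule K L) (LieSubmodule.toSubmodule B)
        (hM₂leM : M₂.toSubmodule ≤ M.toSubmodule)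
      have h4 : M.toSubmodule = M₂.toSubmodule ⊔
          (LieSubmodule.toSubmodule B ⊓ M.toSubmodule) := by
        rw [← hmod, sup_comm M₂.toSubmodule (LieSubmodule.toSubmodule B), hYtop', top_inf_eq]
      have h5 : M.toSubmodule ≤ M₂.toSubmodule := by
        rw [h4]
        exact sup_le le_rfl hNM₂
      exact hM₂M.not_ge (fun x hx => h5 hx)
    have hYlt : Y < ⊤ := lt_top_iff_ne_top.2 hY_ne_top
    obtain ⟨M₁, hYM₁, hM₁top, hM₁prop⟩ := Stmt9Aux.exists_relmax Y ⊤ hYlt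
    have hM₁max : IsMaximalSubalgebra K L M₁ := ⟨hM₁top.ne, fun N' hN' => hM₁prop N' hN' le_top⟩
    have hBM₁ : (B : Set L) ⊆ M₁ := fun x hx => hYM₁ (hBY hx)
    have hAM₁ := hfrat.2 M₁ hM₁max hBM₁
    have hMnotleM₁ : ¬ M ≤ M₁ := by
      intro hle
      apply hM₁top.ne
      rw [eq_top_iff]
      intro x _
      obtain ⟨b, hb, m, hm, rfl⟩ := hLBM x
      exact M₁.add_mem (hBM₁ hb) (hle hm)
    have hMM₁ : M ⊓ M₁ = M₂ := by
      have h1 : M₂ ≤ M ⊓ M₁ := le_inf (le_of_lt hM₂M) (le_trans hM₂Y hYM₁)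
      rcases eq_or_lt_of_le h1 with he | hl
      · exact he.symm
      · have heq := hM₂max (M ⊓ M₁) hl inf_le_left
        exact absurd (le_trans (le_of_eq heq.symm) inf_le_right) hMnotleM₁
    have hCM₂ : (C : Set L) ⊆ M₂ := fun x hx => by
      have hmem : x ∈ M ⊓ M₁ := (LieSubalgebra.mem_inf _ _ _).2 ⟨hCM hx, hAM₁ (hCA hx)⟩
      rwa [hMM₁] at hmem
    have hCleM : LieSubmodule.toSubmodule C ≤ M.toSubmodule := fun x hx => hCM hx
    have hmod2 := sup_inf_assoc_of_le (α := Submodule K L) M₀.toSubmodule hCleM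
    have hfin : M.toSubmodule = LieSubmodule.toSubmodule C ⊔
        (M₀.toSubmodule ⊓ M.toSubmodule) := by
      rw [← hmod2, hCM₀top, top_inf_eq]
    have hGM₂ : M.toSubmodule ⊓ M₀.toSubmodule ≤ M₂.toSubmodule :=
      le_trans (le_trans le_sup_right (le_of_eq hPsub.symm)) hPM₂'
    have hfin2 : M.toSubmodule ≤ M₂.toSubmodule := by
      rw [hfin]
      refine sup_le (fun x hx => hCM₂ hx) ?_
      intro x hx
      exact hGM₂ ⟨hx.2, hx.1⟩
    exact hM₂M.not_ge (fun x hx => hfin2 hx)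
  -- Assemble everything.
  refine ⟨⟨hAC, hBD, ⟨by rw [hsup, sup_comm], by rw [inf_comm, hinf]⟩, ⟨hAC, crux⟩,
    M₀, hM₀max, hLBM₀, hDB, hDM₀⟩, ?_⟩
  intro M hMmax
  constructor
  · rintro ⟨hsumC, _, hDM⟩
    exact ⟨(key1 M hMmax hsumC).1, hDB, hDM⟩
  · rintro ⟨hsumB, _, hDM⟩
    by_cases hCM : (C : Set L) ⊆ M
    · exfalso
      have hAM := crux M hMmax hCM
      have hBM : (B : Set L) ⊆ M := fun x hx => hAM (hBA hx)
      exact hMmax.1 (Stmt9Aux.eq_top_of_sum_subset hsumB hBM)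
    · exact ⟨Stmt9Aux.sumIsTop_of_not_subset C M hMmax hCM, hDC, hDM⟩
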